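/- (Proposition 1) For every integer n ≥ 2, the number a(n) = a_{1,1}(n) of permutations π of {1,…,n} such that π_{i+1} − π_i ≠ 1 for all 1 ≤ i ≤ n−1 satisfies a(n) = (n−1)·a(n−1) + (n−2)·a(n−2). -/

import Mathlib

/-- The set of permutations `π` of `{0,…,n-1}` (equivalently `{1,…,n}`) such that
`π (i+1) - π i ≠ 1` for all valid indices `i`.  For `n = 0` this has exactly one
element (the empty permutation). -/
def noRise (n : ℕ) : Finset (Equiv.Perm (Fin n)) :=
  Finset.univ.filter fun π =>
    ∀ i j : Fin n, (j : ℕ) = (i : ℕ) + 1 →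
      ((π j : ℕ) : ℤ) - ((π i : ℕ) : ℤ) ≠ 1

namespace NoRiseAux
open List

def Good (l : List ℕ) : Prop := l.IsChain (fun x y => y ≠ x + 1)
instance : DecidablePred Good := fun _ => inferInstanceAs (Decidable (List.IsChain _ _))
def LA (n : ℕ) : Finset (List ℕ) := ((List.range n).permutations.toFinset).filter Good
lemma mem_LA {n : ℕ} {l : List ℕ} : l ∈ LA n ↔ l ~ List.range n ∧ Good l := by
  simp [LA, List.mem_permutations]

lemma insertIdx_eq (k v : ℕ) (l : List ℕ) (h : k ≤ l.length) :
    l.insertIdx k v = l.take k ++ v :: l.drop k := by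
  induction l generalizing k with
  | nil => simp at h; subst h; rfl
  | cons a t ih =>
    cases k with
    | zero => rfl
    | succ k => simpa [List.insertIdx_succ_cons] using ih k (by simpa using h)

lemma indexOf_split (v : ℕ) (t d : List ℕ) (h : v ∉ t) :
    (t ++ v :: d).idxOf v = t.length := by
  induction t with
  | nil => simp
  | cons a t ih =>
    have ha : a ≠ v := by rintro rfl; simp at h
    have := ih (by simp at h; tauto)
    simp [List.idxOf_cons, this]
    have : (a == v) = false := by simp [ha]
    simp [this]

lemma erase_split (v : ℕ) (t d : List ℕ) (h : v ∉ t) :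
    (t ++ v :: d).erase v = t ++ d := by
  rw [List.erase_append_right _ h, List.erase_cons_head]

/-- range (m+2) as cons -/
lemma range_succ_perm (n : ℕ) : List.range (n+1) ~ n :: List.range n := by
  rw [List.range_succ]
  exact List.perm_append_singleton _ _

/-- basic facts for members of LA -/
lemma LA_mem_lt {n : ℕ} {l : List ℕ} (hl : l ∈ LA n) : ∀ a ∈ l, a < n := by
  intro a ha
  have := (mem_LA.1 hl).1.mem_iff.1 ha
  simpa using this

lemma LA_nodup {n : ℕ} {l : List ℕ} (hl : l ∈ LA n) : l.Nodup :=
  (mem_LA.1 hl).1.nodup_iff.2 (List.nodup_range)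

lemma LA_length {n : ℕ} {l : List ℕ} (hl : l ∈ LA n) : l.length = n := by
  simpa using (mem_LA.1 hl).1.length_eq

lemma LA_mem {n : ℕ} {l : List ℕ} (hl : l ∈ LA n) {a : ℕ} (ha : a < n) : a ∈ l :=
  (mem_LA.1 hl).1.mem_iff.2 (by simpa using ha)

lemma LA_split {m : ℕ} {l : List ℕ} (hl : l ∈ LA (m+2)) :
    ∃ t d, l = t ++ (m+1) :: d ∧ (m+1) ∉ t ∧ (m+1) ∉ d := by
  obtain ⟨t, d, rfl⟩ := List.append_of_mem (LA_mem hl (show m+1 < m+2 by omega))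
  have hnd := LA_nodup hl
  rw [List.nodup_append] at hnd
  refine ⟨t, d, rfl, ?_, ?_⟩
  · intro h
    exact (hnd.2.2 _ h _ (by simp) rfl).elim
  · have := hnd.2.1
    simp at this
    exact this.1

/-- nodup injectivity for getElem -/
lemma nodup_indexOf_getElem {l : List ℕ} (hnd : l.Nodup) {i : ℕ} (hi : i < l.length) :
    l.idxOf l[i] = i := by
  exact List.Nodup.idxOf_getElem hnd i hi

section Bij1
variable (m : ℕ)

def S1 : Finset (List ℕ) := (LA (m+2)).filter (fun l => Good (l.erase (m+1)))
def T1' : Finset (List ℕ × ℕ) := (LA (m+1)) ×ˢ (Finset.range (m+2))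
def T1 : Finset (List ℕ × ℕ) := (T1' m).filter (fun p => ¬ (p.2 = p.1.idxOf m + 1))

lemma card_S1 : (S1 m).card = (T1 m).card := by
  apply Finset.card_nbij' (i := fun l => (l.erase (m+1), l.idxOf (m+1)))
    (j := fun p => p.1.insertIdx p.2 (m+1))
  · -- forward maps into T1
    intro l hl
    rw [Finset.mem_coe, S1, Finset.mem_filter] at hl
    obtain ⟨hl, hg⟩ := hl
    obtain ⟨t, d, rfl, hvt, hvd⟩ := LA_split hl
    have herase : (t ++ (m+1) :: d).erase (m+1) = t ++ d := erase_split _ _ _ hvt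
    have hidx : (t ++ (m+1) :: d).idxOf (m+1) = t.length := indexOf_split _ _ _ hvt
    have hlen := LA_length hl
    simp only [List.length_append, List.length_cons] at hlen
    rw [Finset.mem_coe, T1, Finset.mem_filter, T1', Finset.mem_product]
    dsimp only
    refine ⟨⟨?_, ?_⟩, ?_⟩
    · rw [herase, mem_LA]
      constructor
      · have h1 : t ++ (m+1) :: d ~ (m+1) :: (t ++ d) := List.perm_middle
        have h2 := (mem_LA.1 hl).1
        have h3 : ((m+1) :: (t ++ d)) ~ (m+1) :: List.range (m+1) :=
          h1.symm.trans (h2.trans (range_succ_perm (m+1)))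
        exact h3.cons_inv
      · rwa [herase] at hg
    · simp only [Finset.mem_range, hidx]
      omega
    · simp only [herase, hidx]
      intro hcontra
      -- then the last element of t is m, contradicting Good l
      have ht_ne : t ≠ [] := by
        intro h; rw [h] at hcontra; simp at hcontra
      have hGood : Good (t ++ (m+1) :: d) := (mem_LA.1 hl).2
      rw [Good, List.isChain_split] at hGood
      have h1 := hGood.1
      rw [List.isChain_append] at h1
      have h2 := h1.2.2 (t.getLast ht_ne) (List.getLast?_eq_getLast ht_ne) (m+1) rfl
      -- h2 : m+1 ≠ t.getLast + 1, so t.getLast ≠ m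
      -- but indexOf m (t ++ d) = t.length - 1 means (t++d)[t.length-1] = m
      have hmem : m ∈ t ++ d := by
        have : m ∈ t ++ (m+1) :: d := LA_mem hl (by omega)
        simp at this ⊢
        tauto
      have hlt : (t ++ d).idxOf m < (t ++ d).length := List.idxOf_lt_length_iff.2 hmem
      have hget : (t ++ d)[(t ++ d).idxOf m] = m := List.getElem_idxOf hlt
      have hidx2 : (t ++ d).idxOf m = t.length - 1 := by omega
      simp only [hidx2] at hget
      have htl : t.length - 1 < t.length := by
        have : 0 < t.length := List.length_pos_iff.2 ht_ne
        omega
      rw [List.getElem_append_left htl] at hget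
      have : t.getLast ht_ne = m := by
        rw [List.getLast_eq_getElem]
        exact hget
      exact h2 (by omega)
  · -- backward maps into S1
    intro p hp
    rw [Finset.mem_coe, T1, Finset.mem_filter, T1', Finset.mem_product] at hp
    obtain ⟨⟨hl', hk⟩, hne⟩ := hp
    obtain ⟨l', k⟩ := p
    simp only [Finset.mem_range] at hk
    simp only at hl' hne ⊢
    have hlen : l'.length = m+1 := LA_length hl'
    have hkle : k ≤ l'.length := by omega
    rw [insertIdx_eq _ _ _ hkle]
    have hvtake : (m+1) ∉ l'.take k := by
      intro h
      have := LA_mem_lt hl' _ (List.mem_of_mem_take h)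
      omega
    have hsplit : Good l' := (mem_LA.1 hl').2
    have htd : l' = l'.take k ++ l'.drop k := (List.take_append_drop k l').symm
    rw [Finset.mem_coe, S1, Finset.mem_filter]
    constructor
    · rw [mem_LA]
      constructor
      · have h1 : l'.take k ++ (m+1) :: l'.drop k ~ (m+1) :: (l'.take k ++ l'.drop k) :=
          List.perm_middle
        rw [← htd] at h1
        exact h1.trans (((mem_LA.1 hl').1.cons (m+1)).trans (range_succ_perm (m+1)).symm)
      · rw [Good, List.isChain_split]
        have hchain : List.IsChain (fun x y => y ≠ x + 1) (l'.take k ++ l'.drop k) := by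
          rw [← htd]; exact hsplit
        rw [List.isChain_append] at hchain
        constructor
        · rw [List.isChain_append]
          refine ⟨hchain.1, List.isChain_singleton _, ?_⟩
          intro x hx y hy
          simp only [List.head?_cons, Option.mem_def, Option.some.injEq] at hy
          subst hy
          -- x is the last element of take k; if x = m we contradict hne
          intro hcontra
          have hxm : x = m := by omega
          -- last of take k l' is at index k-1
          have htne : l'.take k ≠ [] := by
            intro h
            rw [h] at hx
            simp at hx
          have hkpos : 0 < k := by
            by_contra h
            push_neg at h
            interval_cases k
            simp at htne
          have hlast := List.getLast?_eq_getLast htne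
          rw [hlast, Option.mem_def, Option.some.injEq] at hx
          have hlen_take : (l'.take k).length = k := by
            rw [List.length_take]; omega
          have hgl : (l'.take k).getLast htne = (l'.take k)[(l'.take k).length - 1] :=
            List.getLast_eq_getElem _
          have hkk : (l'.take k).length - 1 < (l'.take k).length := by omega
          have hgt : (l'.take k)[(l'.take k).length - 1] = l'[k-1]'(by omega) := by
            have h0 : (l'.take k)[(l'.take k).length - 1] = l'[(l'.take k).length - 1]'(by omega) :=
              List.getElem_take
            simp only [hlen_take] at h0 ⊢
            exact h0
          have hm : l'[k-1]'(by omega) = m := by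
            rw [← hgt, ← hgl, hx, hxm]
          have hidxm : l'.idxOf m = k - 1 := by
            rw [← hm]
            exact List.Nodup.idxOf_getElem (LA_nodup hl') _ _
          exact hne (by omega)
        · rw [List.isChain_cons]
          refine ⟨?_, hchain.2.1⟩
          intro y hy
          have : y ∈ l'.drop k := List.mem_of_mem_head? hy
          have := LA_mem_lt hl' _ (List.mem_of_mem_drop this)
          omega
    · rw [erase_split _ _ _ hvtake, ← htd]
      exact hsplit
  · -- left inverse
    intro l hl
    rw [Finset.mem_coe, S1, Finset.mem_filter] at hl
    obtain ⟨hl, hg⟩ := hl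
    obtain ⟨t, d, rfl, hvt, hvd⟩ := LA_split hl
    dsimp only
    rw [erase_split _ _ _ hvt, indexOf_split _ _ _ hvt]
    rw [insertIdx_eq _ _ _ (by simp), List.take_left, List.drop_left]
  · -- right inverse
    intro p hp
    rw [Finset.mem_coe, T1, Finset.mem_filter, T1', Finset.mem_product] at hp
    obtain ⟨⟨hl', hk⟩, hne⟩ := hp
    obtain ⟨l', k⟩ := p
    simp only [Finset.mem_range] at hk
    simp only at hl' hne ⊢
    have hlen : l'.length = m+1 := LA_length hl'
    have hkle : k ≤ l'.length := by omega
    rw [insertIdx_eq _ _ _ hkle]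
    have hvtake : (m+1) ∉ l'.take k := by
      intro h
      have := LA_mem_lt hl' _ (List.mem_of_mem_take h)
      omega
    rw [Prod.ext_iff]
    constructor
    · simp only
      rw [erase_split _ _ _ hvtake, List.take_append_drop]
    · simp only
      rw [indexOf_split _ _ _ hvtake, List.length_take]
      omega
lemma card_T1 : (T1 m).card = (m+1) * (LA (m+1)).card := by
  have h1 : (T1' m).card = (LA (m+1)).card * (m+2) := by
    rw [T1', Finset.card_product, Finset.card_range]
  have h2 : ((T1' m).filter (fun p => p.2 = p.1.idxOf m + 1)).card = (LA (m+1)).card := by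
    apply Finset.card_nbij' (i := fun p => p.1) (j := fun l' => (l', l'.idxOf m + 1))
    · intro p hp
      rw [Finset.mem_coe, Finset.mem_filter, T1', Finset.mem_product] at hp
      exact hp.1.1
    · intro l' hl'
      rw [Finset.mem_coe, Finset.mem_filter, T1', Finset.mem_product]
      refine ⟨⟨hl', ?_⟩, rfl⟩
      simp only [Finset.mem_range]
      have : l'.idxOf m < l'.length := List.idxOf_lt_length_iff.2 (LA_mem hl' (by omega))
      have := LA_length hl'
      omega
    · intro p hp
      rw [Finset.mem_coe, Finset.mem_filter] at hp
      exact Prod.ext rfl hp.2.symm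
    · intro l' _
      rfl
  have h3 := Finset.card_filter_add_card_filter_not
    (s := T1' m) (p := fun p => p.2 = p.1.idxOf m + 1)
  rw [h2, h1] at h3
  have h4 : (LA (m+1)).card * (m+2) = (m+1) * (LA (m+1)).card + (LA (m+1)).card := by ring
  rw [T1]
  omega

end Bij1
lemma chain'_imp_mem {R S : ℕ → ℕ → Prop} {l : List ℕ} (h : List.IsChain R l)
    (H : ∀ a ∈ l.dropLast, ∀ b ∈ l, R a b → S a b) : List.IsChain S l := by
  induction l with
  | nil => simp
  | cons a t ih =>
    cases t with
    | nil => simp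
    | cons b t' =>
      rw [List.isChain_cons_cons] at h ⊢
      refine ⟨H a (by simp) b (by simp) h.1, ih h.2 ?_⟩
      intro x hx y hy hxy
      exact H x (by simp [List.dropLast] at hx ⊢; tauto) y (by simp at hy ⊢; tauto) hxy

lemma takeWhile_split (p : ℕ → Bool) (s e : List ℕ) (a : ℕ)
    (hs : ∀ b ∈ s, p b = true) (ha : p a = false) :
    List.takeWhile p (s ++ a :: e) = s ∧ List.dropWhile p (s ++ a :: e) = a :: e := by
  induction s with
  | nil => simp [List.takeWhile, List.dropWhile, ha]
  | cons b s ih =>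
    have hb : p b = true := hs b (by simp)
    have := ih (fun x hx => hs x (by simp [hx]))
    simp [List.takeWhile, List.dropWhile, hb, this]

def phi (x u : ℕ) : ℕ := if u ≤ x then u else u - 1
def psi (x u : ℕ) : ℕ := if u ≤ x then u else u + 1
lemma phi_psi (x u : ℕ) : phi x (psi x u) = u := by unfold phi psi; split_ifs <;> omega
lemma psi_phi (x u : ℕ) (h : u ≠ x + 1) : psi x (phi x u) = u := by
  unfold phi psi; split_ifs <;> omega
lemma psi_pointwise (x u z : ℕ) (h : z ≠ u + 1) : psi x z ≠ psi x u + 1 := by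
  unfold psi; split_ifs <;> omega
lemma phi_pointwise (x u z : ℕ) (h : z ≠ u + 1) (hu : u ≠ x + 1) (hz : z ≠ x + 1)
    (hxz : ¬(u = x ∧ z = x + 2)) : phi x z ≠ phi x u + 1 := by
  unfold phi; split_ifs <;> omega
lemma psi_ne_xsucc (x u : ℕ) : psi x u ≠ x + 1 := by unfold psi; split_ifs <;> omega
lemma phi_ne_x (x u : ℕ) (h1 : u ≠ x) (h2 : u ≠ x + 1) : phi x u ≠ x := by
  unfold phi; split_ifs <;> omega
lemma psi_x (x : ℕ) : psi x x = x := by simp [psi]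
lemma phi_x (x : ℕ) : phi x x = x := by simp [phi]
lemma psi_lt (x m u : ℕ) (hx : x < m) (hu : u < m) : psi x u < m + 1 := by
  unfold psi; split_ifs <;> omega
lemma perm_psi_aux (x : ℕ) : ∀ k, x < k → ((x+1) :: (List.range k).map (psi x)) ~ List.range (k+1) := by
  intro k
  induction k with
  | zero => omega
  | succ k ih =>
    intro hk
    rcases Nat.lt_or_ge x k with h | h
    · have : (List.range (k+1)).map (psi x) = (List.range k).map (psi x) ++ [k+1] := by
        rw [List.range_succ, List.map_append]
        simp [psi, Nat.not_le.2 h]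
      rw [this, List.range_succ]
      calc (x+1) :: ((List.range k).map (psi x) ++ [k+1])
          = ((x+1) :: (List.range k).map (psi x)) ++ [k+1] := rfl
        _ ~ List.range (k+1) ++ [k+1] := (ih h).append_right _
    · have hxk : x = k := by omega
      subst hxk
      have : (List.range (x+1)).map (psi x) = List.range (x+1) := by
        rw [List.map_congr_left (g := id), List.map_id]
        intro a ha
        simp only [List.mem_range] at ha
        simp [psi, id]
        omega
      rw [this, show List.range (x+2) = List.range (x+1) ++ [x+1] from List.range_succ (n := x+1)]
      exact (List.perm_append_singleton _ _).symm
lemma perm_psi (x m : ℕ) (h : x < m) :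
    ((m+1) :: (x+1) :: (List.range m).map (psi x)) ~ List.range (m+2) := by
  calc (m+1) :: (x+1) :: (List.range m).map (psi x)
      ~ (m+1) :: List.range (m+1) := (perm_psi_aux x m h).cons _
    _ ~ List.range (m+2) := by
        rw [show List.range (m+2) = List.range (m+1) ++ [m+1] from List.range_succ (n := m+1)]
        exact (List.perm_append_singleton _ _).symm

lemma map_phi_psi (x : ℕ) (l : List ℕ) : (l.map (psi x)).map (phi x) = l := by
  rw [List.map_map]
  rw [List.map_congr_left (g := id), List.map_id]
  intro a _
  exact phi_psi x a
lemma map_psi_phi (x : ℕ) (l : List ℕ) (h : (x+1) ∉ l) : (l.map (phi x)).map (psi x) = l := by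
  rw [List.map_map]
  rw [List.map_congr_left (g := id), List.map_id]
  intro a ha
  exact psi_phi x a (by rintro rfl; exact h ha)

section Bij2
variable (m : ℕ)

def S2 : Finset (List ℕ) := (LA (m+2)).filter (fun l => ¬ Good (l.erase (m+1)))
def T2 : Finset (List ℕ × ℕ) := (LA m) ×ˢ (Finset.range m)

def xOf (w : ℕ) (l : List ℕ) : ℕ := (l.take (l.idxOf w)).getLastD 0
def ctr (w : ℕ) (l : List ℕ) : List ℕ × ℕ :=
  (((l.erase w).erase (xOf w l + 1)).map (phi (xOf w l)), xOf w l)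
def ins2 (w : ℕ) (p : List ℕ × ℕ) : List ℕ :=
  ((p.1.takeWhile (· != p.2)).map (psi p.2)) ++
    p.2 :: w :: (p.2+1) :: (((p.1.dropWhile (· != p.2)).tail).map (psi p.2))

/-- structure of members of S2 -/
lemma S2_split {l : List ℕ} (hl : l ∈ LA (m+2)) (hb : ¬ Good (l.erase (m+1))) :
    ∃ t₁ x d₂, l = t₁ ++ x :: (m+1) :: (x+1) :: d₂ ∧ x < m ∧
      (m+1) ∉ t₁ ∧ x ∉ t₁ ∧ (x+1) ∉ t₁ ∧ (m+1) ∉ d₂ ∧ x ∉ d₂ ∧ (x+1) ∉ d₂ := by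
  obtain ⟨t, d, rfl, hvt, hvd⟩ := LA_split hl
  have herase : (t ++ (m+1) :: d).erase (m+1) = t ++ d := erase_split _ _ _ hvt
  rw [herase] at hb
  have hGood : Good (t ++ (m+1) :: d) := (mem_LA.1 hl).2
  rw [Good, List.isChain_split] at hGood
  have hct : List.IsChain (fun x y => y ≠ x + 1) t := (List.isChain_append.1 hGood.1).1
  have hcd : List.IsChain (fun x y => y ≠ x + 1) d := (List.isChain_cons.1 hGood.2).2
  rw [Good, List.isChain_append] at hb
  push_neg at hb
  obtain ⟨x, hx, z, hz, hzx⟩ := hb hct hcd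
  have ht_ne : t ≠ [] := by rintro rfl; simp at hx
  have hd_ne : d ≠ [] := by rintro rfl; simp at hz
  obtain ⟨z', d₂, rfl⟩ : ∃ z' d₂, d = z' :: d₂ := by
    cases d with
    | nil => exact absurd rfl hd_ne
    | cons z' d₂ => exact ⟨z', d₂, rfl⟩
  simp only [List.head?_cons, Option.mem_def, Option.some.injEq] at hz
  subst hz
  have hxlast : t.getLast ht_ne = x := by
    have := List.getLast?_eq_getLast ht_ne
    rw [this, Option.mem_def, Option.some.injEq] at hx
    omega
  have htdecomp : t = t.dropLast ++ [x] := by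
    rw [← hxlast]
    exact (List.dropLast_append_getLast ht_ne).symm
  set t₁ := t.dropLast with ht₁
  have hzeq : z' = x + 1 := by omega
  subst hzeq
  have hnd := LA_nodup hl
  rw [htdecomp] at hnd hvt
  simp only [List.nodup_append, List.nodup_cons, List.mem_append, List.mem_cons,
    List.disjoint_left, List.mem_singleton] at hnd
  simp only [List.mem_append, List.mem_singleton] at hvt
  refine ⟨t₁, x, d₂, ?_, ?_, ?_, ?_, ?_, ?_, ?_, ?_⟩
  · rw [htdecomp]; simp
  · -- x < m
    have h1 : (x+1) ∈ t ++ (m+1) :: (x+1) :: d₂ := by simp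
    have h2 := LA_mem_lt hl _ h1
    have h3 : x + 1 ≠ m + 1 := by
      rintro h
      apply hvd
      simp [← h]
    omega
  · intro hmem; exact hvt (Or.inl hmem)
  · intro hmem
    have := hnd.1.2.2 _ hmem _ (Or.inl rfl) rfl
    simp at this
  · intro hmem
    have := hnd.2.2 _ (Or.inl hmem) _ (Or.inr (Or.inl rfl)) rfl
    simp at this
  · intro hmem
    apply hvd
    simp [hmem]
  · intro hmem
    exact hnd.2.2 _ (Or.inr (Or.inl rfl)) _ (Or.inr (Or.inr hmem)) rfl
  · exact hnd.2.1.2.1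

lemma ctr_eq {x : ℕ} (t₁ d₂ : List ℕ) (hx : x < m+1) (hvt : (m+1) ∉ t₁) (hx1t : (x+1) ∉ t₁) :
    ctr (m+1) (t₁ ++ x :: (m+1) :: (x+1) :: d₂) = ((t₁ ++ x :: d₂).map (phi x), x) := by
  have hL : t₁ ++ x :: (m+1) :: (x+1) :: d₂ = (t₁ ++ [x]) ++ (m+1) :: (x+1) :: d₂ := by simp
  have h1 : (m+1) ∉ t₁ ++ [x] := by
    simp only [List.mem_append, List.mem_singleton]
    rintro (h | h)
    · exact hvt h
    · omega
  have h2 : (x+1) ∉ t₁ ++ [x] := by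
    simp only [List.mem_append, List.mem_singleton]
    rintro (h | h)
    · exact hx1t h
    · omega
  have hidx : (t₁ ++ x :: (m+1) :: (x+1) :: d₂).idxOf (m+1) = (t₁ ++ [x]).length := by
    rw [hL]; exact indexOf_split _ _ _ h1
  have hxof : xOf (m+1) (t₁ ++ x :: (m+1) :: (x+1) :: d₂) = x := by
    rw [xOf, hidx, hL, List.take_left, List.getLastD_concat]
  rw [ctr, hxof]
  have he1 : (t₁ ++ x :: (m+1) :: (x+1) :: d₂).erase (m+1) = (t₁ ++ [x]) ++ (x+1) :: d₂ := by
    rw [hL]; exact erase_split _ _ _ h1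
  have he2 : ((t₁ ++ [x]) ++ (x+1) :: d₂).erase (x+1) = (t₁ ++ [x]) ++ d₂ :=
    erase_split _ _ _ h2
  rw [he1, he2]
  simp

lemma ins2_eq {x : ℕ} (s e : List ℕ) (hxs : x ∉ s) :
    ins2 (m+1) (s ++ x :: e, x) = (s.map (psi x)) ++ x :: (m+1) :: (x+1) :: (e.map (psi x)) := by
  have hsp := takeWhile_split (· != x) s e x
    (fun b hb => by simp; rintro rfl; exact hxs hb) (by simp)
  rw [ins2]
  simp only
  rw [hsp.1, hsp.2]
  simp

lemma perm_decomp (t₁ d₂ : List ℕ) (x v : ℕ) :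
    t₁ ++ x :: v :: (x+1) :: d₂ ~ v :: (x+1) :: (t₁ ++ x :: d₂) := by
  calc t₁ ++ x :: v :: (x+1) :: d₂
      = (t₁ ++ [x]) ++ v :: ((x+1) :: d₂) := by simp
    _ ~ v :: ((t₁ ++ [x]) ++ (x+1) :: d₂) := List.perm_middle
    _ ~ v :: ((x+1) :: ((t₁ ++ [x]) ++ d₂)) := List.Perm.cons _ List.perm_middle
    _ = v :: (x+1) :: (t₁ ++ x :: d₂) := by simp

lemma good_contraction {x : ℕ} {t₁ d₂ : List ℕ}
    (hG1 : List.IsChain (fun a b => b ≠ a + 1) (t₁ ++ [x]))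
    (hG2 : List.IsChain (fun a b => b ≠ a + 1) ((x+1) :: d₂))
    (hxt : x ∉ t₁) (hx1t : (x+1) ∉ t₁) (hxd : x ∉ d₂) (hx1d : (x+1) ∉ d₂) :
    Good ((t₁ ++ x :: d₂).map (phi x)) := by
  have hmap : (t₁ ++ x :: d₂).map (phi x) = (t₁.map (phi x)) ++ x :: (d₂.map (phi x)) := by
    simp [phi_x]
  rw [Good, hmap, List.isChain_split]
  constructor
  · have h : t₁.map (phi x) ++ [x] = (t₁ ++ [x]).map (phi x) := by simp [phi_x]
    rw [h, List.isChain_map]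
    apply chain'_imp_mem hG1
    intro a ha b hb hR
    rw [List.dropLast_concat] at ha
    simp only [List.mem_append, List.mem_singleton] at hb
    apply phi_pointwise x a b hR
    · rintro rfl; exact hx1t ha
    · rintro rfl
      rcases hb with h | h
      · exact hx1t h
      · omega
    · rintro ⟨rfl, -⟩; exact hxt ha
  · cases d₂ with
    | nil => simp
    | cons z d₃ =>
      rw [List.isChain_cons_cons] at hG2
      have hzd : z ∈ z :: d₃ := by simp
      rw [List.map_cons, List.isChain_cons_cons]
      constructor
      · have hz1 : z ≠ x + 1 := by rintro rfl; exact hx1d hzd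
        have hz2 : z ≠ x + 2 := by rintro rfl; exact hG2.1 rfl
        unfold phi; split_ifs <;> omega
      · rw [show phi x z :: d₃.map (phi x) = ((z :: d₃).map (phi x)) from rfl,
          List.isChain_map]
        apply chain'_imp_mem hG2.2
        intro a ha b hb hR
        have ha' : a ∈ z :: d₃ := List.dropLast_subset _ ha
        apply phi_pointwise x a b hR
        · rintro rfl; exact hx1d ha'
        · rintro rfl; exact hx1d hb
        · rintro ⟨rfl, -⟩; exact hxd ha'

lemma good_ins {x : ℕ} {s e : List ℕ} (hxm : x < m)
    (hGs : List.IsChain (fun a b => b ≠ a + 1) (s ++ [x]))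
    (hGe : List.IsChain (fun a b => b ≠ a + 1) (x :: e)) :
    Good ((s.map (psi x)) ++ x :: (m+1) :: (x+1) :: (e.map (psi x))) := by
  rw [Good, List.isChain_split]
  constructor
  · have h : s.map (psi x) ++ [x] = (s ++ [x]).map (psi x) := by simp [psi_x]
    rw [h, List.isChain_map]
    exact hGs.imp (fun a b hab => psi_pointwise x a b hab)
  · rw [List.isChain_cons_cons]
    refine ⟨by omega, ?_⟩
    rw [List.isChain_cons_cons]
    refine ⟨by omega, ?_⟩
    cases e with
    | nil => simp
    | cons z e' =>
      rw [List.isChain_cons_cons] at hGe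
      rw [List.map_cons, List.isChain_cons_cons]
      constructor
      · have hz1 : z ≠ x + 1 := hGe.1
        unfold psi; split_ifs <;> omega
      · rw [show psi x z :: e'.map (psi x) = ((z :: e').map (psi x)) from rfl,
          List.isChain_map]
        exact hGe.2.imp (fun a b hab => psi_pointwise x a b hab)

lemma notGood_ins {x : ℕ} (A B : List ℕ) : ¬ Good ((A ++ [x]) ++ (x+1) :: B) := by
  rw [Good, List.isChain_append]
  intro h
  exact h.2.2 x (by rw [List.getLast?_concat]; rfl) (x+1) rfl rfl

lemma card_S2 : (S2 m).card = (T2 m).card := by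
  apply Finset.card_nbij' (i := ctr (m+1)) (j := ins2 (m+1))
  · -- forward maps into T2
    intro l hl
    rw [Finset.mem_coe, S2, Finset.mem_filter] at hl
    obtain ⟨hl, hb⟩ := hl
    obtain ⟨t₁, x, d₂, heq, hxm, hvt, hxt, hx1t, hvd, hxd, hx1d⟩ := S2_split m hl hb
    subst heq
    rw [ctr_eq m t₁ d₂ (by omega) hvt hx1t]
    rw [Finset.mem_coe, T2, Finset.mem_product]
    constructor
    · -- contracted list ∈ LA m
      simp only
      rw [mem_LA]
      constructor
      · -- permutation of range m
        have h1 : t₁ ++ x :: (m+1) :: (x+1) :: d₂ ~ (m+1) :: (x+1) :: (t₁ ++ x :: d₂) :=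
          perm_decomp t₁ d₂ x (m+1)
        have h2 := (mem_LA.1 hl).1
        have h3 : (m+1) :: (x+1) :: (t₁ ++ x :: d₂) ~
            (m+1) :: (x+1) :: (List.range m).map (psi x) :=
          (h1.symm.trans h2).trans (perm_psi x m hxm).symm
        have h4 : t₁ ++ x :: d₂ ~ (List.range m).map (psi x) := h3.cons_inv.cons_inv
        have h5 := h4.map (phi x)
        rwa [map_phi_psi] at h5
      · -- Good
        have hGood : Good ((t₁ ++ [x]) ++ (m+1) :: ((x+1) :: d₂)) := by
          have := (mem_LA.1 hl).2
          rw [show t₁ ++ x :: (m+1) :: (x+1) :: d₂ = (t₁ ++ [x]) ++ (m+1) :: ((x+1) :: d₂)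
            from by simp] at this
          exact this
        rw [Good, List.isChain_split] at hGood
        have hG1 : List.IsChain (fun a b => b ≠ a + 1) (t₁ ++ [x]) :=
          (List.isChain_append.1 hGood.1).1
        have hG2 : List.IsChain (fun a b => b ≠ a + 1) ((x+1) :: d₂) :=
          (List.isChain_cons.1 hGood.2).2
        exact good_contraction hG1 hG2 hxt hx1t hxd hx1d
    · simp only [Finset.mem_range]
      exact hxm
  · -- backward maps into S2
    intro p hp
    rw [Finset.mem_coe, T2, Finset.mem_product] at hp
    obtain ⟨hp1, hp2⟩ := hp
    obtain ⟨l'', x⟩ := p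
    simp only [Finset.mem_range] at hp2
    simp only at hp1 ⊢
    have hxl : x ∈ l'' := LA_mem hp1 hp2
    obtain ⟨s, e, rfl⟩ := List.append_of_mem hxl
    have hnd := LA_nodup hp1
    rw [List.nodup_append] at hnd
    have hxs : x ∉ s := fun h => (hnd.2.2 _ h _ (by simp) rfl).elim
    have hxe : x ∉ e := by
      have := hnd.2.1
      simp at this
      exact this.1
    rw [ins2_eq m s e hxs]
    have hGood : Good (s ++ x :: e) := (mem_LA.1 hp1).2
    rw [Good, List.isChain_split] at hGood
    have hsl : ∀ a ∈ s, a < m := fun a ha => LA_mem_lt hp1 a (by simp [ha])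
    have hel : ∀ a ∈ e, a < m := fun a ha => LA_mem_lt hp1 a (by simp [ha])
    rw [Finset.mem_coe, S2, Finset.mem_filter]
    refine ⟨?_, ?_⟩
    · rw [mem_LA]
      constructor
      · have h1 : s.map (psi x) ++ x :: (m+1) :: (x+1) :: e.map (psi x) ~
            (m+1) :: (x+1) :: (s.map (psi x) ++ x :: e.map (psi x)) := by
          have := perm_decomp (s.map (psi x)) (e.map (psi x)) x (m+1)
          exact this
        have h2 : s.map (psi x) ++ x :: e.map (psi x) = (s ++ x :: e).map (psi x) := by
          simp [psi_x]
        have h3 : (s ++ x :: e).map (psi x) ~ (List.range m).map (psi x) :=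
          ((mem_LA.1 hp1).1).map _
        calc s.map (psi x) ++ x :: (m+1) :: (x+1) :: e.map (psi x)
            ~ (m+1) :: (x+1) :: (s.map (psi x) ++ x :: e.map (psi x)) := h1
          _ = (m+1) :: (x+1) :: (s ++ x :: e).map (psi x) := by rw [h2]
          _ ~ (m+1) :: (x+1) :: (List.range m).map (psi x) := (h3.cons _).cons _
          _ ~ List.range (m+2) := perm_psi x m hp2
      · exact good_ins m hp2 hGood.1 hGood.2
    · -- erasing m+1 is not Good
      have hv1 : (m+1) ∉ s.map (psi x) ++ [x] := by
        simp only [List.mem_append, List.mem_singleton, List.mem_map]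
        rintro (⟨a, ha, hpa⟩ | h)
        · have := hsl a ha
          have := psi_lt x m a hp2 this
          omega
        · omega
      have herase : (s.map (psi x) ++ x :: (m+1) :: (x+1) :: e.map (psi x)).erase (m+1)
          = (s.map (psi x) ++ [x]) ++ (x+1) :: e.map (psi x) := by
        rw [show s.map (psi x) ++ x :: (m+1) :: (x+1) :: e.map (psi x)
          = (s.map (psi x) ++ [x]) ++ (m+1) :: ((x+1) :: e.map (psi x)) from by simp]
        exact erase_split _ _ _ hv1
      simp only [herase]
      exact notGood_ins _ _
  · -- left inverse : ins2 (ctr l) = l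
    intro l hl
    rw [Finset.mem_coe, S2, Finset.mem_filter] at hl
    obtain ⟨hl, hb⟩ := hl
    obtain ⟨t₁, x, d₂, heq, hxm, hvt, hxt, hx1t, hvd, hxd, hx1d⟩ := S2_split m hl hb
    subst heq
    rw [ctr_eq m t₁ d₂ (by omega) hvt hx1t]
    have hmapsplit : (t₁ ++ x :: d₂).map (phi x) = t₁.map (phi x) ++ x :: d₂.map (phi x) := by
      simp [phi_x]
    have hxnotin : x ∉ t₁.map (phi x) := by
      simp only [List.mem_map]
      rintro ⟨a, ha, hpa⟩
      exact phi_ne_x x a (fun h => hxt (h ▸ ha)) (fun h => hx1t (h ▸ ha)) hpa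
    rw [hmapsplit, ins2_eq m _ _ hxnotin, map_psi_phi x t₁ hx1t, map_psi_phi x d₂ hx1d]
  · -- right inverse : ctr (ins2 p) = p
    intro p hp
    rw [Finset.mem_coe, T2, Finset.mem_product] at hp
    obtain ⟨hp1, hp2⟩ := hp
    obtain ⟨l'', x⟩ := p
    simp only [Finset.mem_range] at hp2
    simp only at hp1 ⊢
    have hxl : x ∈ l'' := LA_mem hp1 hp2
    obtain ⟨s, e, rfl⟩ := List.append_of_mem hxl
    have hnd := LA_nodup hp1
    rw [List.nodup_append] at hnd
    have hxs : x ∉ s := fun h => (hnd.2.2 _ h _ (by simp) rfl).elim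
    have hsl : ∀ a ∈ s, a < m := fun a ha => LA_mem_lt hp1 a (by simp [ha])
    rw [ins2_eq m s e hxs]
    have hvt : (m+1) ∉ s.map (psi x) := by
      simp only [List.mem_map]
      rintro ⟨a, ha, hpa⟩
      have := psi_lt x m a hp2 (hsl a ha)
      omega
    have hx1t : (x+1) ∉ s.map (psi x) := by
      simp only [List.mem_map]
      rintro ⟨a, ha, hpa⟩
      exact psi_ne_xsucc x a hpa
    rw [ctr_eq m _ _ (by omega) hvt hx1t]
    have h2 : s.map (psi x) ++ x :: e.map (psi x) = (s ++ x :: e).map (psi x) := by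
      simp [psi_x]
    rw [h2, map_phi_psi]

end Bij2
lemma card_noRise (n : ℕ) : (noRise n).card = (LA n).card := by
  apply Finset.card_bij (fun π _ => List.ofFn (fun k : Fin n => (π k : ℕ)))
  · intro π hπ
    rw [mem_LA]
    refine ⟨?_, ?_⟩
    · apply List.perm_of_nodup_nodup_toFinset_eq
      · rw [List.nodup_ofFn]
        intro a b hab
        exact π.injective (Fin.val_injective hab)
      · exact List.nodup_range
      · ext a
        simp only [List.mem_toFinset, List.mem_ofFn, List.mem_range, Set.mem_range]
        constructor
        · rintro ⟨i, rfl⟩; exact (π i).isLt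
        · intro ha
          exact ⟨π.symm ⟨a, ha⟩, by simp⟩
    · rw [Good, List.isChain_iff_getElem]
      intro i hi
      simp only [List.length_ofFn] at hi
      simp only [List.getElem_ofFn]
      have hmem := (Finset.mem_filter.1 hπ).2
      have key := hmem ⟨i, by omega⟩ ⟨i+1, by omega⟩ (by simp)
      intro hcontra
      apply key
      have : ((π ⟨i+1, by omega⟩ : Fin n) : ℕ) = ((π ⟨i, by omega⟩ : Fin n) : ℕ) + 1 := hcontra
      omega
  · intro π hπ ρ hρ h
    rw [List.ofFn_inj] at h
    ext k
    exact congrFun h k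
  · intro l hl
    rw [mem_LA] at hl
    obtain ⟨hp, hg⟩ := hl
    have hlen : l.length = n := by simpa using hp.length_eq
    have hlt : ∀ a ∈ l, a < n := fun a ha => by simpa using hp.mem_iff.1 ha
    have hnd : l.Nodup := hp.nodup_iff.2 (List.nodup_range)
    have hinj : Function.Injective (fun k : Fin n => (⟨l.get (Fin.cast hlen.symm k), hlt _ (l.get_mem _)⟩ : Fin n)) := by
      intro a b hab
      have h2 : l.get (Fin.cast hlen.symm a) = l.get (Fin.cast hlen.symm b) := congrArg Fin.val hab
      have := List.nodup_iff_injective_get.1 hnd h2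
      simpa [Fin.ext_iff] using this
    have hbij := (Finite.injective_iff_bijective).1 hinj
    refine ⟨Equiv.ofBijective _ hbij, ?_, ?_⟩
    · rw [noRise, Finset.mem_filter]
      refine ⟨Finset.mem_univ _, ?_⟩
      intro i j hij hcontra
      rw [Good, List.isChain_iff_getElem] at hg
      have key := hg i (by omega)
      apply key
      simp only [Equiv.ofBijective_apply] at hcontra
      have h1 : (l.get (Fin.cast hlen.symm j) : ℤ) - (l.get (Fin.cast hlen.symm i) : ℤ) = 1 := hcontra
      have h2 : l.get (Fin.cast hlen.symm j) = l.get ⟨(i:ℕ)+1, by omega⟩ := by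
        congr 1
        exact Fin.ext hij
      have h3 : l.get (Fin.cast hlen.symm i) = l.get ⟨(i:ℕ), by omega⟩ := rfl
      rw [h2, h3] at h1
      simp only [List.get_eq_getElem] at h1
      omega
    · apply List.ext_get (by simp [hlen])
      intro k h1 h2
      simp only [List.get_ofFn, Equiv.ofBijective_apply]
      congr 1

lemma card_T2 (m : ℕ) : (T2 m).card = m * (LA m).card := by
  rw [T2, Finset.card_product, Finset.card_range]
  ring

lemma main_rec (m : ℕ) :
    (LA (m+2)).card = (m+1) * (LA (m+1)).card + m * (LA m).card := by
  have hsplit := Finset.card_filter_add_card_filter_not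
    (s := LA (m+2)) (p := fun l => Good (l.erase (m+1)))
  have h1 : (S1 m).card = (m+1) * (LA (m+1)).card := by
    rw [card_S1, card_T1]
  have h2 : (S2 m).card = m * (LA m).card := by
    rw [card_S2, card_T2]
  rw [S1] at h1
  rw [S2] at h2
  omega

end NoRiseAux

/-- Proposition 1: for `n ≥ 2`, with `a(n) = a_{1,1}(n)`,
`a(n) = (n-1)·a(n-1) + (n-2)·a(n-2)`. -/
theorem noRise_recurrence (n : ℕ) (hn : 2 ≤ n) :
    (noRise n).card =
      (n - 1) * (noRise (n - 1)).card + (n - 2) * (noRise (n - 2)).card := by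
  obtain ⟨m, rfl⟩ : ∃ m, n = m + 2 := ⟨n - 2, by omega⟩
  have e0 : m + 2 - 1 = m + 1 := by omega
  have e1 : m + 2 - 2 = m := by omega
  rw [e0, e1, NoRiseAux.card_noRise, NoRiseAux.card_noRise, NoRiseAux.card_noRise]
  exact NoRiseAux.main_rec m
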